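/- Let m be a nonnegative integer, μ real, and define G₁(s) := Γ(1+s) Γ(μ−m+s/2)/Γ(1−m+s/2). Then as s → +∞ along the positive real axis, G₁(s) = 2^{1−μ} Γ(s+μ) (1 + C₁/(s+μ−1) + O(s^{−2})), where C₁ = (1/2)(1−μ)(4m−μ). -/

import Mathlib

open Real Filter Asymptotics Topology

lemma log_taylor2 {t : ℝ} (ht : |t| ≤ 1/2) :
    |Real.log (1 + t) - t + t^2/2| ≤ 2 * |t|^3 := by
  have h : |(-t)| < 1 := by rw [abs_neg]; linarith
  have h2 := Real.abs_log_sub_add_sum_range_le h 2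
  simp [Finset.sum_range_succ] at h2
  have habs : 1 - |(-t)| ≥ 1/2 := by rw [abs_neg]; linarith
  have h3 : |(-t)|^(2+1) / (1 - |(-t)|) ≤ 2 * |t|^3 := by
    rw [abs_neg]
    norm_num
    rw [div_le_iff₀ (by linarith)]
    nlinarith [pow_nonneg (abs_nonneg t) 3]
  calc |Real.log (1 + t) - t + t^2/2|
      = |(-t + (-t)^2/2) + Real.log (1 - (-t))| := by ring_nf
    _ ≤ |(-t)|^(2+1)/(1-|(-t)|) := by
        have := Real.abs_log_sub_add_sum_range_le h 2
        convert this using 2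
        simp [Finset.sum_range_succ]; ring
    _ ≤ 2*|t|^3 := h3

lemma Gamma_convex_bound {x y t : ℝ} (hx : 0 < x) (hy : 0 < y) (ht0 : 0 ≤ t) (ht1 : t ≤ 1) :
    Real.Gamma ((1-t)*x + t*y) ≤ Real.Gamma x ^ (1-t) * Real.Gamma y ^ t := by
  have hz : 0 < (1-t)*x + t*y := by
    rcases eq_or_lt_of_le ht0 with h|h
    · rw [← h]; simpa using hx
    · nlinarith [mul_nonneg (by linarith : (0:ℝ) ≤ 1-t) hx.le, mul_pos h hy]
  have hc := Real.convexOn_log_Gamma.2 (Set.mem_Ioi.mpr hx) (Set.mem_Ioi.mpr hy)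
      (by linarith : (0:ℝ) ≤ 1 - t) ht0 (by ring)
  simp only [Function.comp_apply, smul_eq_mul] at hc
  have := Real.exp_le_exp.mpr hc
  rwa [Real.exp_log (Real.Gamma_pos_of_pos hz), Real.exp_add,
    ← Real.log_rpow (Real.Gamma_pos_of_pos hx), ← Real.log_rpow (Real.Gamma_pos_of_pos hy),
    Real.exp_log (Real.rpow_pos_of_pos (Real.Gamma_pos_of_pos hx) _),
    Real.exp_log (Real.rpow_pos_of_pos (Real.Gamma_pos_of_pos hy) _)] at this

lemma tendsto_base {l : ℝ} (h0 : 0 ≤ l) (h1 : l ≤ 1) :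
    Tendsto (fun x : ℝ => Real.Gamma (x+l) / (Real.Gamma x * x ^ l)) atTop (𝓝 1) := by
  have hlow : Tendsto (fun x : ℝ => (x/(x+l)) ^ (1-l)) atTop (𝓝 1) := by
    have h1' : Tendsto (fun x : ℝ => x/(x+l)) atTop (𝓝 1) := by
      have h2 : Tendsto (fun x : ℝ => (1 + l * x⁻¹)⁻¹) atTop (𝓝 1) := by
        have h3 := (tendsto_inv_atTop_zero.const_mul l).const_add 1
        simpa using h3.inv₀ (by norm_num)
      refine h2.congr' ?_
      filter_upwards [eventually_gt_atTop (max 0 (-l))] with x hx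
      have hx0 : 0 < x := lt_of_le_of_lt (le_max_left _ _) hx
      have hxl : 0 < x + l := by have := lt_of_le_of_lt (le_max_right _ _) hx; linarith
      field_simp
    have := h1'.rpow_const (p := 1-l) (Or.inr (by linarith))
    simpa using this
  refine tendsto_of_tendsto_of_tendsto_of_le_of_le' hlow tendsto_const_nhds ?_ ?_
  · filter_upwards [eventually_ge_atTop 1] with x hx
    have hx0 : (0:ℝ) < x := by linarith
    have hxl : (0:ℝ) < x + l := by linarith
    have hG := Real.Gamma_pos_of_pos hx0
    have hGl := Real.Gamma_pos_of_pos hxl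
    have key := Gamma_convex_bound hxl (by linarith : (0:ℝ) < x+l+1)
      (by linarith : (0:ℝ) ≤ 1 - l) (by linarith : 1 - l ≤ 1)
    have harg : (1-(1-l))*(x+l) + (1-l)*(x+l+1) = x + 1 := by ring
    rw [harg, Real.Gamma_add_one hx0.ne', Real.Gamma_add_one hxl.ne',
      Real.mul_rpow hxl.le hGl.le] at key
    have hexp : (1:ℝ) - (1-l) = l := by ring
    rw [hexp] at key
    -- key : x * Γ x ≤ Γ(x+l)^l * ((x+l)^(1-l) * Γ(x+l)^(1-l))
    have key2 : x * Real.Gamma x ≤ Real.Gamma (x+l) * (x+l)^(1-l) := by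
      calc x * Real.Gamma x ≤ _ := key
        _ = Real.Gamma (x+l) * (x+l)^(1-l) := by
            rw [mul_comm ((x+l)^(1-l)), ← mul_assoc, ← Real.rpow_add hGl]
            norm_num
    rw [Real.div_rpow hx0.le hxl.le, div_le_div_iff₀ (Real.rpow_pos_of_pos hxl _)
      (mul_pos hG (Real.rpow_pos_of_pos hx0 _))]
    calc x^(1-l) * (Real.Gamma x * x^l) = x * Real.Gamma x := by
          rw [mul_comm (Real.Gamma x), ← mul_assoc, ← Real.rpow_add hx0]; norm_num
      _ ≤ _ := key2
  · filter_upwards [eventually_ge_atTop 1] with x hx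
    have hx0 : (0:ℝ) < x := by linarith
    have hG := Real.Gamma_pos_of_pos hx0
    have key := Gamma_convex_bound hx0 (by linarith : (0:ℝ) < x+1) h0 h1
    have harg : (1-l)*x + l*(x+1) = x + l := by ring
    rw [harg, Real.Gamma_add_one hx0.ne', Real.mul_rpow hx0.le hG.le] at key
    rw [div_le_one (mul_pos hG (Real.rpow_pos_of_pos hx0 _))]
    calc Real.Gamma (x+l) ≤ _ := key
      _ = Real.Gamma x * x ^ l := by
          rw [mul_comm (x^l), ← mul_assoc, ← Real.rpow_add hG]; norm_num

def Pprop (a : ℝ) : Prop :=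
  Tendsto (fun x : ℝ => Real.Gamma (x+a) / (Real.Gamma x * x ^ a)) atTop (𝓝 1)

lemma tendsto_linear_ratio (a : ℝ) : Tendsto (fun x : ℝ => (x+a)/x) atTop (𝓝 1) := by
  have h3 := (tendsto_inv_atTop_zero.const_mul a).const_add 1
  rw [mul_zero, add_zero] at h3
  refine h3.congr' ?_
  filter_upwards [eventually_gt_atTop 0] with x hx
  field_simp

lemma step_up {a : ℝ} (h : Pprop a) : Pprop (a+1) := by
  have := (tendsto_linear_ratio a).mul h
  rw [mul_one] at this
  refine this.congr' ?_
  filter_upwards [eventually_gt_atTop (max 0 (-a))] with x hx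
  have hx0 : 0 < x := lt_of_le_of_lt (le_max_left _ _) hx
  have hxa : 0 < x + a := by have := lt_of_le_of_lt (le_max_right _ _) hx; linarith
  have hG := Real.Gamma_pos_of_pos hx0
  have h1 : x + (a+1) = (x+a) + 1 := by ring
  rw [h1, Real.Gamma_add_one hxa.ne', Real.rpow_add_one hx0.ne']
  field_simp

lemma step_down {a : ℝ} (h : Pprop (a+1)) : Pprop a := by
  have hinv := ((tendsto_linear_ratio a).inv₀ one_ne_zero).mul h
  rw [inv_one, mul_one] at hinv
  refine hinv.congr' ?_
  filter_upwards [eventually_gt_atTop (max 0 (-a))] with x hx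
  have hx0 : 0 < x := lt_of_le_of_lt (le_max_left _ _) hx
  have hxa : 0 < x + a := by have := lt_of_le_of_lt (le_max_right _ _) hx; linarith
  have hG := Real.Gamma_pos_of_pos hx0
  have h1 : x + (a+1) = (x+a) + 1 := by ring
  rw [h1, Real.Gamma_add_one hxa.ne', Real.rpow_add_one hx0.ne']
  rw [inv_div]
  field_simp

lemma tendsto_R1 (a : ℝ) : Pprop a := by
  have base : Pprop (Int.fract a) :=
    tendsto_base (Int.fract_nonneg a) (Int.fract_lt_one a).le
  have hup : ∀ k : ℕ, Pprop (Int.fract a + k) := by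
    intro k
    induction k with
    | zero => simpa using base
    | succ n ih =>
        have := step_up ih
        have he : Int.fract a + ↑n + 1 = Int.fract a + ↑(n+1) := by push_cast; ring
        rwa [he] at this
  have hdown : ∀ k : ℕ, Pprop (Int.fract a - k) := by
    intro k
    induction k with
    | zero => simpa using base
    | succ n ih =>
        refine step_down ?_
        have he : Int.fract a - ↑(n+1) + 1 = Int.fract a - ↑n := by push_cast; ring
        rwa [he]
  rcases le_or_gt 0 ⌊a⌋ with h|h
  · obtain ⟨k, hk⟩ := Int.eq_ofNat_of_zero_le h
    have ha : a = Int.fract a + (k:ℝ) := by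
      have := Int.floor_add_fract a
      rw [hk] at this
      push_cast at this ⊢
      linarith
    rw [ha]; exact hup k
  · obtain ⟨k, hk⟩ := Int.eq_ofNat_of_zero_le (by omega : (0:ℤ) ≤ -⌊a⌋)
    have ha : a = Int.fract a - (k:ℝ) := by
      have := Int.floor_add_fract a
      have hk' : (⌊a⌋:ℝ) = -(k:ℝ) := by
        have : ((-⌊a⌋ : ℤ):ℝ) = ((k:ℤ):ℝ) := by rw [hk]
        push_cast at this
        linarith
      rw [hk'] at this
      linarith
    rw [ha]; exact hdown k

lemma tendsto_ratio (a b : ℝ) :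
    Tendsto (fun x : ℝ => Real.Gamma (x+a)/Real.Gamma (x+b) * x^(b-a)) atTop (𝓝 1) := by
  have h := (tendsto_R1 a).div (tendsto_R1 b) one_ne_zero
  rw [div_one] at h
  refine h.congr' ?_
  filter_upwards [eventually_gt_atTop (max 0 (max (-a) (-b)))] with x hx
  have hx0 : 0 < x := lt_of_le_of_lt (le_max_left _ _) hx
  have hxa : 0 < x + a := by
    have := lt_of_le_of_lt ((le_max_left _ _).trans (le_max_right _ _)) hx; linarith
  have hxb : 0 < x + b := by
    have := lt_of_le_of_lt ((le_max_right _ _).trans (le_max_right _ _)) hx; linarith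
  have hG := Real.Gamma_pos_of_pos hx0
  have hGb := Real.Gamma_pos_of_pos hxb
  have hpa := Real.rpow_pos_of_pos hx0 a
  have hpb := Real.rpow_pos_of_pos hx0 b
  rw [Pi.div_apply, Real.rpow_sub hx0]
  field_simp

set_option maxHeartbeats 800000 in
lemma h_estimate (a b : ℝ) : ∃ C : ℝ, 0 ≤ C ∧ ∀ y : ℝ, 2*(|a|+|b|+1) ≤ y →
    |(Real.log (y+a) - Real.log (y+b) + (b-a)*(Real.log (y+1) - Real.log y))
      - (b-a)*(a+b-1)/2/(y*(y+1))|
      ≤ C/(y*(y+1)*(y+2)) := by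
  set c' : ℝ := (b-a)*(a+b-1)/2 with hc'
  refine ⟨6*(2*(|a|^3+|b|^3+|b - a|) + |c'|), by positivity, fun y hy => ?_⟩
  have ha0 := abs_nonneg a
  have hb0 := abs_nonneg b
  have hy2 : (2:ℝ) ≤ y := by linarith
  have hy0 : (0:ℝ) < y := by linarith
  have hya : 0 < y + a := by have := neg_abs_le a; linarith
  have hyb : 0 < y + b := by have := neg_abs_le b; linarith
  have hy1 : (0:ℝ) < y + 1 := by linarith
  have hla : Real.log (y+a) - Real.log y = Real.log (1 + a/y) := by
    rw [← Real.log_div hya.ne' hy0.ne']; congr 1; field_simp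
  have hlb : Real.log (y+b) - Real.log y = Real.log (1 + b/y) := by
    rw [← Real.log_div hyb.ne' hy0.ne']; congr 1; field_simp
  have hl1 : Real.log (y+1) - Real.log y = Real.log (1 + 1/y) := by
    rw [← Real.log_div hy1.ne' hy0.ne']; congr 1; field_simp
  have hta : |a/y| ≤ 1/2 := by
    rw [abs_div, abs_of_pos hy0, div_le_iff₀ hy0]; linarith
  have htb : |b/y| ≤ 1/2 := by
    rw [abs_div, abs_of_pos hy0, div_le_iff₀ hy0]; linarith
  have ht1 : |1/y| ≤ 1/2 := by
    rw [abs_div, abs_of_pos hy0, div_le_iff₀ hy0, abs_one]; linarith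
  have Ea := log_taylor2 hta
  have Eb := log_taylor2 htb
  have E1 := log_taylor2 ht1
  set Xa : ℝ := Real.log (1 + a/y) - a/y + (a/y)^2/2 with hXa
  set Xb : ℝ := Real.log (1 + b/y) - b/y + (b/y)^2/2 with hXb
  set X1 : ℝ := Real.log (1 + 1/y) - 1/y + (1/y)^2/2 with hX1
  have key : (Real.log (y+a) - Real.log (y+b) + (b-a)*(Real.log (y+1) - Real.log y))
      - c'/(y*(y+1))
      = (Xa - Xb + (b-a)*X1) + (c'/y^2 - c'/(y*(y+1))) := by
    have e1 : Real.log (y+a) - Real.log (y+b)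
        = (Real.log (y+a) - Real.log y) - (Real.log (y+b) - Real.log y) := by ring
    rw [e1, hla, hlb, hl1, hXa, hXb, hX1, hc']
    field_simp
    ring
  rw [key]
  have h1 : |a/y|^3 = |a|^3/y^3 := by rw [abs_div, abs_of_pos hy0, div_pow]
  have h2 : |b/y|^3 = |b|^3/y^3 := by rw [abs_div, abs_of_pos hy0, div_pow]
  have h3 : |1/y|^3 = 1/y^3 := by rw [abs_div, abs_of_pos hy0, abs_one, div_pow, one_pow]
  rw [h1] at Ea; rw [h2] at Eb; rw [h3] at E1
  have t1 : |Xa - Xb + (b-a)*X1| ≤ |Xa| + |Xb| + |b - a| * |X1| := by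
    calc |Xa - Xb + (b-a)*X1| ≤ |Xa - Xb| + |(b-a)*X1| := abs_add_le _ _
      _ ≤ (|Xa| + |Xb|) + |b - a| * |X1| := by
          rw [abs_mul]
          exact add_le_add (abs_sub _ _) le_rfl
  have habs : |Xa - Xb + (b-a)*X1| ≤ 2*(|a|^3+|b|^3+|b - a|)/y^3 := by
    have t2 : |b - a| * |X1| ≤ |b - a| * (2*(1/y^3)) :=
      mul_le_mul_of_nonneg_left E1 (abs_nonneg _)
    have := add_le_add (add_le_add Ea Eb) t2
    calc |Xa - Xb + (b-a)*X1| ≤ |Xa| + |Xb| + |b - a| * |X1| := t1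
      _ ≤ 2*(|a|^3/y^3) + 2*(|b|^3/y^3) + |b - a| * (2*(1/y^3)) := this
      _ = 2*(|a|^3+|b|^3+|b - a|)/y^3 := by ring
  have hc'bound : |c'/y^2 - c'/(y*(y+1))| ≤ |c'|/y^3 := by
    have e : c'/y^2 - c'/(y*(y+1)) = c'/(y^2*(y+1)) := by
      field_simp; ring
    rw [e, abs_div, abs_of_pos (by positivity : (0:ℝ) < y^2*(y+1))]
    apply div_le_div_of_nonneg_left (abs_nonneg _) (by positivity)
    nlinarith
  calc |Xa - Xb + (b-a)*X1 + (c'/y^2 - c'/(y*(y+1)))|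
      ≤ |Xa - Xb + (b-a)*X1| + |c'/y^2 - c'/(y*(y+1))| := abs_add_le _ _
    _ ≤ 2*(|a|^3+|b|^3+|b - a|)/y^3 + |c'|/y^3 := add_le_add habs hc'bound
    _ = (2*(|a|^3+|b|^3+|b - a|) + |c'|)/y^3 := by ring
    _ ≤ 6*(2*(|a|^3+|b|^3+|b - a|) + |c'|)/(y*(y+1)*(y+2)) := by
        have hD : 0 ≤ 2*(|a|^3+|b|^3+|b - a|) + |c'| := by positivity
        rw [div_le_div_iff₀ (by positivity) (by positivity)]
        have hy6 : y*(y+1)*(y+2) ≤ 6*y^3 := by nlinarith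
        calc (2*(|a|^3+|b|^3+|b - a|) + |c'|) * (y*(y+1)*(y+2))
            ≤ (2*(|a|^3+|b|^3+|b - a|) + |c'|) * (6*y^3) := mul_le_mul_of_nonneg_left hy6 hD
          _ = 6*(2*(|a|^3+|b|^3+|b - a|) + |c'|) * y^3 := by ring

noncomputable def Ffun (a b : ℝ) (x : ℝ) : ℝ :=
  Real.log (Real.Gamma (x+a)) - Real.log (Real.Gamma (x+b)) + (b-a) * Real.log x

noncomputable def hfun (a b : ℝ) (y : ℝ) : ℝ :=
  Real.log (y+a) - Real.log (y+b) + (b-a)*(Real.log (y+1) - Real.log y)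

lemma Ffun_exp {a b x : ℝ} (hx : 0 < x) (hxa : 0 < x + a) (hxb : 0 < x + b) :
    Real.exp (Ffun a b x) = Real.Gamma (x+a)/Real.Gamma (x+b) * x^(b-a) := by
  rw [Ffun, Real.exp_add, Real.exp_sub, Real.exp_log (Real.Gamma_pos_of_pos hxa),
    Real.exp_log (Real.Gamma_pos_of_pos hxb), Real.rpow_def_of_pos hx, mul_comm (b-a)]

lemma Ffun_rec {a b y : ℝ} (hy : 0 < y) (hya : 0 < y + a) (hyb : 0 < y + b) :
    Ffun a b (y+1) = Ffun a b y + hfun a b y := by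
  have e1 : y + 1 + a = (y+a) + 1 := by ring
  have e2 : y + 1 + b = (y+b) + 1 := by ring
  rw [Ffun, Ffun, hfun, e1, e2, Real.Gamma_add_one hya.ne', Real.Gamma_add_one hyb.ne',
    Real.log_mul hya.ne' (Real.Gamma_pos_of_pos hya).ne',
    Real.log_mul hyb.ne' (Real.Gamma_pos_of_pos hyb).ne']
  ring

lemma Ffun_tendsto_zero (a b : ℝ) : Tendsto (Ffun a b) atTop (𝓝 0) := by
  have hlog := (Real.continuousAt_log one_ne_zero).tendsto.comp (tendsto_ratio a b)
  rw [Real.log_one] at hlog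
  refine hlog.congr' ?_
  filter_upwards [eventually_gt_atTop (max 0 (max (-a) (-b)))] with x hx
  have hx0 : 0 < x := lt_of_le_of_lt (le_max_left _ _) hx
  have hxa : 0 < x + a := by
    have := lt_of_le_of_lt ((le_max_left _ _).trans (le_max_right _ _)) hx; linarith
  have hxb : 0 < x + b := by
    have := lt_of_le_of_lt ((le_max_right _ _).trans (le_max_right _ _)) hx; linarith
  show Real.log (Real.Gamma (x+a)/Real.Gamma (x+b) * x^(b-a)) = Ffun a b x
  rw [← Ffun_exp hx0 hxa hxb, Real.log_exp]

lemma Ffun_bound (a b : ℝ) : ∃ C : ℝ, 0 ≤ C ∧ ∀ x : ℝ, 2*(|a|+|b|+1) ≤ x →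
    |Ffun a b x - (a-b)*(a+b-1)/2/x| ≤ C/x^2 := by
  obtain ⟨C, hC0, hC⟩ := h_estimate a b
  refine ⟨C/2, by positivity, fun x hx => ?_⟩
  set c' : ℝ := (b-a)*(a+b-1)/2 with hc'
  have hax := abs_nonneg a
  have hbx := abs_nonneg b
  have hpos : ∀ y : ℝ, 2*(|a|+|b|+1) ≤ y → 0 < y ∧ 0 < y + a ∧ 0 < y + b := by
    intro y hy
    have h1 := neg_abs_le a
    have h2 := neg_abs_le b
    exact ⟨by linarith, by linarith, by linarith⟩
  obtain ⟨hx0, hxa, hxb⟩ := hpos x hx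
  have hxk : ∀ k : ℕ, 2*(|a|+|b|+1) ≤ x + k := by
    intro k
    have : (0:ℝ) ≤ k := Nat.cast_nonneg k
    linarith
  -- partial sums
  have hsum : ∀ n : ℕ, Ffun a b (x+n) = Ffun a b x + ∑ k ∈ Finset.range n, hfun a b (x+k) := by
    intro n
    induction n with
    | zero => simp
    | succ n ih =>
        obtain ⟨h1, h2, h3⟩ := hpos (x+n) (hxk n)
        have e : (x + ↑(n+1) : ℝ) = (x + n) + 1 := by push_cast; ring
        rw [e, Ffun_rec h1 h2 h3, ih, Finset.sum_range_succ]
        ring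
  -- telescoping main term
  have tele1 : ∀ n : ℕ, ∑ k ∈ Finset.range n, c'/((x+k)*(x+k+1))
      = c' * (1/x - 1/(x+n)) := by
    intro n
    calc ∑ k ∈ Finset.range n, c'/((x+k)*(x+k+1))
        = ∑ k ∈ Finset.range n, (c' * (1/(x+k)) - c' * (1/(x+(k+1:ℕ)))) := by
          apply Finset.sum_congr rfl
          intro k hk
          obtain ⟨h1, -, -⟩ := hpos (x+k) (hxk k)
          have h1' : (0:ℝ) < x + k + 1 := by linarith
          have e : (x + ↑(k+1) : ℝ) = x + k + 1 := by push_cast; ring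
          rw [e]
          field_simp
          ring
      _ = c' * (1/(x+(0:ℕ))) - c' * (1/(x+n)) :=
          Finset.sum_range_sub' (f := fun k : ℕ => c' * (1/(x+k))) n
      _ = c' * (1/x - 1/(x+n)) := by push_cast; ring
  -- error sum bound
  have tele2 : ∀ n : ℕ, ∑ k ∈ Finset.range n, C/((x+k)*(x+k+1)*(x+k+2))
      ≤ C/2 * (1/x^2) := by
    intro n
    have heq : ∑ k ∈ Finset.range n, C/((x+k)*(x+k+1)*(x+k+2))
        = C/2 * (1/(x*(x+1))) - C/2 * (1/((x+n)*(x+n+1))) := by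
      calc ∑ k ∈ Finset.range n, C/((x+k)*(x+k+1)*(x+k+2))
          = ∑ k ∈ Finset.range n,
              (C/2 * (1/((x+k)*(x+k+1))) - C/2 * (1/((x+(k+1:ℕ))*(x+(k+1:ℕ)+1)))) := by
            apply Finset.sum_congr rfl
            intro k hk
            obtain ⟨h1, -, -⟩ := hpos (x+k) (hxk k)
            have h1' : (0:ℝ) < x + k + 1 := by linarith
            have h2' : (0:ℝ) < x + k + 2 := by linarith
            have e : (x + ↑(k+1) : ℝ) = x + k + 1 := by push_cast; ring
            rw [e]
            field_simp
            ring
        _ = C/2 * (1/((x+(0:ℕ))*(x+(0:ℕ)+1))) - C/2 * (1/((x+n)*(x+n+1))) :=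
            Finset.sum_range_sub' (f := fun k : ℕ => C/2 * (1/((x+k)*(x+k+1)))) n
        _ = C/2 * (1/(x*(x+1))) - C/2 * (1/((x+n)*(x+n+1))) := by push_cast; ring
    rw [heq]
    obtain ⟨h1, -, -⟩ := hpos (x+n) (hxk n)
    have h2 : (0:ℝ) < x + n + 1 := by linarith
    have hnn : 0 ≤ C/2 * (1/((x+n)*(x+n+1))) := by positivity
    have hfrac : 1/(x*(x+1)) ≤ 1/x^2 := by
      apply div_le_div_of_nonneg_left one_pos.le (by positivity)
      nlinarith
    have : C/2 * (1/(x*(x+1))) ≤ C/2 * (1/x^2) :=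
      mul_le_mul_of_nonneg_left hfrac (by positivity)
    linarith
  -- bound on partial sums
  have hpart : ∀ n : ℕ, |(Ffun a b (x+n) - Ffun a b x) - c' * (1/x - 1/(x+n))|
      ≤ C/2 * (1/x^2) := by
    intro n
    have e1 : Ffun a b (x+n) - Ffun a b x = ∑ k ∈ Finset.range n, hfun a b (x+k) := by
      rw [hsum n]; ring
    rw [e1, ← tele1 n, ← Finset.sum_sub_distrib]
    calc |∑ k ∈ Finset.range n, (hfun a b (x+k) - c'/((x+k)*(x+k+1)))|
        ≤ ∑ k ∈ Finset.range n, |hfun a b (x+k) - c'/((x+k)*(x+k+1))| :=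
          Finset.abs_sum_le_sum_abs _ _
      _ ≤ ∑ k ∈ Finset.range n, C/((x+k)*(x+k+1)*(x+k+2)) := by
          apply Finset.sum_le_sum
          intro k hk
          exact hC (x+k) (hxk k)
      _ ≤ C/2 * (1/x^2) := tele2 n
  -- take the limit
  have hFn : Tendsto (fun n : ℕ => Ffun a b (x + n)) atTop (𝓝 0) :=
    (Ffun_tendsto_zero a b).comp
      (tendsto_atTop_add_const_left atTop x tendsto_natCast_atTop_atTop)
  have hinvn : Tendsto (fun n : ℕ => 1/(x + (n:ℝ))) atTop (𝓝 0) := by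
    simp only [one_div]
    exact (tendsto_atTop_add_const_left atTop x tendsto_natCast_atTop_atTop).inv_tendsto_atTop
  have hlim : Tendsto (fun n : ℕ => (Ffun a b (x+n) - Ffun a b x) - c' * (1/x - 1/(x+n)))
      atTop (𝓝 ((0 - Ffun a b x) - c' * (1/x - 0))) :=
    (hFn.sub tendsto_const_nhds).sub ((tendsto_const_nhds.sub hinvn).const_mul c')
  have hfinal := le_of_tendsto hlim.abs (Eventually.of_forall hpart)
  have e2 : Ffun a b x - (a-b)*(a+b-1)/2/x = -((0 - Ffun a b x) - c' * (1/x - 0)) := by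
    rw [hc']; ring
  have e3 : C/2 * (1/x^2) = C/2/x^2 := by ring
  rw [e2, abs_neg, ← e3]
  exact hfinal

lemma ratio_expansion (a b : ℝ) :
    (fun x : ℝ => Real.Gamma (x+a)/Real.Gamma (x+b) * x^(b-a)
      - (1 + (a-b)*(a+b-1)/2/x)) =O[atTop] (fun x : ℝ => (x^2)⁻¹) := by
  obtain ⟨C, hC0, hC⟩ := Ffun_bound a b
  set c : ℝ := (a-b)*(a+b-1)/2 with hc
  rw [isBigO_iff]
  refine ⟨(|c|+C)^2 + C, ?_⟩
  filter_upwards [eventually_ge_atTop (max (2*(|a|+|b|+1)) (max 1 (|c|+C)))] with x hx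
  have hx1 : 2*(|a|+|b|+1) ≤ x := le_trans (le_max_left _ _) hx
  have hxone : (1:ℝ) ≤ x := le_trans ((le_max_left _ _).trans (le_max_right _ _)) hx
  have hxc : |c|+C ≤ x := le_trans ((le_max_right _ _).trans (le_max_right _ _)) hx
  have hx0 : (0:ℝ) < x := by linarith
  have hxa : 0 < x + a := by
    have h1 := neg_abs_le a; have h2 := abs_nonneg b; linarith
  have hxb : 0 < x + b := by
    have h1 := neg_abs_le b; have h2 := abs_nonneg a; linarith
  have hFb := hC x hx1
  set F := Ffun a b x with hF
  have hF1 : |F| ≤ (|c|+C)/x := by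
    have t1 : |F| ≤ |F - c/x| + |c/x| := by
      have := abs_add_le (F - c/x) (c/x); simpa using this
    have t2 : |c/x| = |c|/x := by rw [abs_div, abs_of_pos hx0]
    have t3 : C/x^2 ≤ C/x := by
      apply div_le_div_of_nonneg_left hC0 hx0
      nlinarith
    have t4 : (|c|+C)/x = |c|/x + C/x := by ring
    have t5 : |F - c/x| ≤ C/x^2 := hFb
    linarith
  have hFle1 : |F| ≤ 1 := le_trans hF1 (by rw [div_le_one hx0]; exact hxc)
  have hexp := Real.abs_exp_sub_one_sub_id_le hFle1
  have hR : Real.Gamma (x+a)/Real.Gamma (x+b) * x^(b-a) = Real.exp F :=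
    (Ffun_exp hx0 hxa hxb).symm
  rw [Real.norm_eq_abs, Real.norm_eq_abs, hR]
  have key : Real.exp F - (1 + c/x) = (Real.exp F - 1 - F) + (F - c/x) := by ring
  have hFsq : F^2 ≤ (|c|+C)^2/x^2 := by
    have := pow_le_pow_left₀ (abs_nonneg F) hF1 2
    rw [sq_abs] at this
    calc F^2 ≤ ((|c|+C)/x)^2 := this
      _ = (|c|+C)^2/x^2 := by rw [div_pow]
  have habs2 : |(x^2)⁻¹| = (x^2)⁻¹ := abs_of_pos (by positivity)
  rw [habs2, key]
  calc |(Real.exp F - 1 - F) + (F - c/x)| ≤ |Real.exp F - 1 - F| + |F - c/x| := abs_add_le _ _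
    _ ≤ F^2 + C/x^2 := add_le_add hexp hFb
    _ ≤ (|c|+C)^2/x^2 + C/x^2 := by linarith
    _ = ((|c|+C)^2 + C) * (x^2)⁻¹ := by ring

/-- `G₁(s) = Γ(1+s) Γ(μ−m+s/2)/Γ(1−m+s/2)`. -/
noncomputable def G1 (m : ℕ) (μ : ℝ) (s : ℝ) : ℝ :=
  Real.Gamma (1 + s) * Real.Gamma (μ - m + s / 2) / Real.Gamma (1 - m + s / 2)

theorem G1_inverse_factorial_expansion (m : ℕ) (μ : ℝ) :
    (fun s : ℝ => G1 m μ s -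
        (2 : ℝ) ^ (1 - μ) * Real.Gamma (s + μ) *
          (1 + ((1 - μ) * (4 * (m : ℝ) - μ) / 2) / (s + μ - 1)))
      =O[Filter.atTop] (fun s : ℝ => Real.Gamma (s + μ) / s ^ 2) := by
  set K : ℝ := (1 - μ) * (4 * (m : ℝ) - μ) / 2 with hK
  set c₁ : ℝ := (1-μ)*(1+μ-1)/2 with hc₁
  set c₂ : ℝ := (μ-1)*(μ-2*m) with hc₂
  set A : ℝ → ℝ := fun s => Real.Gamma (s+1)/Real.Gamma (s+μ) * s^(μ-1) with hA
  set B : ℝ → ℝ := fun s =>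
    Real.Gamma (s/2+(μ-(m:ℝ)))/Real.Gamma (s/2+(1-(m:ℝ))) * (s/2)^(1-μ) with hB
  have hKsum : K = c₁ + c₂ := by rw [hK, hc₁, hc₂]; ring
  have hhalf : Tendsto (fun s : ℝ => s/2) atTop atTop :=
    tendsto_id.atTop_div_const two_pos
  have hexpeq : (1-(m:ℝ)) - (μ-(m:ℝ)) = 1 - μ := by ring
  -- A expansion
  have hu : (fun s : ℝ => A s - (1 + c₁/s)) =O[atTop] (fun s : ℝ => (s^2)⁻¹) :=
    ratio_expansion 1 μ
  -- B expansion
  have hv : (fun s : ℝ => B s - (1 + c₂/s)) =O[atTop] (fun s : ℝ => (s^2)⁻¹) := by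
    have h0 := (ratio_expansion (μ-(m:ℝ)) (1-(m:ℝ))).comp_tendsto hhalf
    simp only [Function.comp_def, hexpeq] at h0
    have h4 : ((fun x : ℝ => (x^2)⁻¹) ∘ (fun s : ℝ => s/2)) =O[atTop]
        (fun s : ℝ => (s^2)⁻¹) := by
      have e : ∀ s : ℝ, ((s/2)^2)⁻¹ = 4*(s^2)⁻¹ := by
        intro s
        rw [div_pow, inv_div, div_eq_mul_inv]
        norm_num
      have := (isBigO_refl (fun s : ℝ => (s^2)⁻¹) atTop).const_mul_left 4
      exact (this.congr_left (fun s => (e s).symm)).congr_left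
        (fun s => by simp [Function.comp])
    refine ((h0.trans ?_).congr' ?_ EventuallyEq.rfl)
    · simpa only [Function.comp_def] using h4
    · filter_upwards [eventually_gt_atTop 0] with s hs
      have hs' : s ≠ 0 := hs.ne'
      have e : (μ-(m:ℝ)-(1-(m:ℝ)))*(μ-(m:ℝ)+(1-(m:ℝ))-1)/2/(s/2) = c₂/s := by
        rw [hc₂, div_div]
        congr 1
        · ring
        · ring
      simp only [hB]
      rw [e]
  clear_value K c₁ c₂
  -- A and B are O(1)
  have hAO : A =O[atTop] (fun _ : ℝ => (1:ℝ)) := by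
    rw [isBigO_one_iff]
    exact (tendsto_ratio 1 μ).norm.isBoundedUnder_le
  have hBO : B =O[atTop] (fun _ : ℝ => (1:ℝ)) := by
    rw [isBigO_one_iff]
    have ht := (tendsto_ratio (μ-(m:ℝ)) (1-(m:ℝ))).comp hhalf
    simp only [Function.comp_def, hexpeq] at ht
    exact ht.norm.isBoundedUnder_le
  have h1c : (fun s : ℝ => 1 + c₁/s) =O[atTop] (fun _ : ℝ => (1:ℝ)) := by
    rw [isBigO_one_iff]
    have hdiv : Tendsto (fun s : ℝ => c₁/s) atTop (𝓝 0) := by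
      simpa [div_eq_mul_inv] using tendsto_inv_atTop_zero.const_mul c₁
    have : Tendsto (fun s : ℝ => 1 + c₁/s) atTop (𝓝 (1 + 0)) :=
      tendsto_const_nhds.add hdiv
    exact this.norm.isBoundedUnder_le
  -- product expansion
  have hprod : (fun s : ℝ => A s * B s - (1 + (c₁+c₂)/s)) =O[atTop]
      (fun s : ℝ => (s^2)⁻¹) := by
    have t1 : (fun s : ℝ => (A s - (1 + c₁/s)) * B s) =O[atTop]
        (fun s : ℝ => (s^2)⁻¹) := by
      have := hu.mul hBO
      simpa using this
    have t2 : (fun s : ℝ => (1 + c₁/s) * (B s - (1 + c₂/s))) =O[atTop]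
        (fun s : ℝ => (s^2)⁻¹) := by
      have := h1c.mul hv
      simpa using this
    have t3 : (fun s : ℝ => c₁*c₂*(s^2)⁻¹) =O[atTop] (fun s : ℝ => (s^2)⁻¹) :=
      (isBigO_refl _ _).const_mul_left _
    have := (t1.add t2).add t3
    refine this.congr_left ?_
    intro s
    ring
  -- denominator shift
  have hshift : (fun s : ℝ => (1 + (c₁+c₂)/s) - (1 + K/(s+μ-1))) =O[atTop]
      (fun s : ℝ => (s^2)⁻¹) := by
    rw [isBigO_iff]
    refine ⟨2*|K*(μ-1)|, ?_⟩
    filter_upwards [eventually_ge_atTop (max 1 (2*|μ-1|))] with s hs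
    have hs1 : (1:ℝ) ≤ s := le_trans (le_max_left _ _) hs
    have hs2 : 2*|μ-1| ≤ s := le_trans (le_max_right _ _) hs
    have habs := abs_nonneg (μ-1)
    have hm1 := neg_abs_le (μ-1)
    have hm2 := le_abs_self (μ-1)
    have hs0 : (0:ℝ) < s := by linarith
    have hsμ : 0 < s + μ - 1 := by linarith
    have e : (1 + (c₁+c₂)/s) - (1 + K/(s+μ-1)) = K*(μ-1)/(s*(s+μ-1)) := by
      rw [← hKsum]
      field_simp
      ring
    rw [e, Real.norm_eq_abs, Real.norm_eq_abs, abs_div,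
      abs_of_pos (by positivity : (0:ℝ) < s*(s+μ-1)),
      abs_of_pos (by positivity : (0:ℝ) < (s^2)⁻¹)]
    rw [div_le_iff₀ (by positivity)]
    have hcross : s^2 ≤ 2*(s*(s+μ-1)) := by nlinarith
    calc |K*(μ-1)| = |K*(μ-1)| * (s^2 * (s^2)⁻¹) := by
          rw [mul_inv_cancel₀ (by positivity : (s:ℝ)^2 ≠ 0), mul_one]
      _ ≤ |K*(μ-1)| * (2*(s*(s+μ-1)) * (s^2)⁻¹) := by
          have : (0:ℝ) ≤ (s^2)⁻¹ := by positivity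
          have := mul_le_mul_of_nonneg_right hcross this
          exact mul_le_mul_of_nonneg_left this (abs_nonneg _)
      _ = 2*|K*(μ-1)| * (s^2)⁻¹ * (s*(s+μ-1)) := by ring
  -- combined
  have hW : (fun s : ℝ => A s * B s - (1 + K/(s+μ-1))) =O[atTop]
      (fun s : ℝ => (s^2)⁻¹) := by
    have := hprod.add hshift
    refine this.congr_left ?_
    intro s
    ring
  -- multiply by Gamma
  have hG : (fun s : ℝ => (2:ℝ)^(1-μ) * (Real.Gamma (s+μ) *
      (A s * B s - (1 + K/(s+μ-1))))) =O[atTop]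
      (fun s : ℝ => Real.Gamma (s+μ) * (s^2)⁻¹) :=
    ((isBigO_refl (fun s : ℝ => Real.Gamma (s+μ)) atTop).mul hW).const_mul_left _
  refine hG.congr' ?_ ?_
  · filter_upwards [eventually_ge_atTop (2*(|μ|+(m:ℝ)+1))] with s hs
    have hμ1 := neg_abs_le μ
    have hμ2 := le_abs_self μ
    have hμ0 := abs_nonneg μ
    have hm0 : (0:ℝ) ≤ (m:ℝ) := Nat.cast_nonneg m
    have hs0 : (0:ℝ) < s := by linarith
    have hsμ : 0 < s + μ := by linarith
    have hs1 : 0 < s + 1 := by linarith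
    have hsa : 0 < s/2 + (μ-(m:ℝ)) := by linarith
    have hsb : 0 < s/2 + (1-(m:ℝ)) := by linarith
    have hGμ : Real.Gamma (s+μ) ≠ 0 := (Real.Gamma_pos_of_pos hsμ).ne'
    have hGb : Real.Gamma (s/2+(1-(m:ℝ))) ≠ 0 := (Real.Gamma_pos_of_pos hsb).ne'
    have h2p : (0:ℝ) < (2:ℝ)^(1-μ) := Real.rpow_pos_of_pos two_pos _
    have e3 : s^(μ-1) * s^(1-μ) = 1 := by
      rw [← Real.rpow_add hs0]
      norm_num
    have e4 : (s/2)^(1-μ) = s^(1-μ)/(2:ℝ)^(1-μ) :=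
      Real.div_rpow hs0.le (by norm_num : (0:ℝ) ≤ 2) (1-μ)
    have hid : (2:ℝ)^(1-μ) * (Real.Gamma (s+μ) * (A s * B s)) = G1 m μ s := by
      rw [G1]
      simp only [hA, hB]
      rw [e4]
      rw [show (1:ℝ) + s = s + 1 from by ring,
        show μ - (m:ℝ) + s/2 = s/2 + (μ-(m:ℝ)) from by ring,
        show (1:ℝ) - (m:ℝ) + s/2 = s/2 + (1-(m:ℝ)) from by ring]
      calc (2:ℝ)^(1-μ) * (Real.Gamma (s+μ) * (Real.Gamma (s+1)/Real.Gamma (s+μ) * s^(μ-1) *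
              (Real.Gamma (s/2+(μ-(m:ℝ)))/Real.Gamma (s/2+(1-(m:ℝ)))
                * (s^(1-μ)/(2:ℝ)^(1-μ)))))
          = Real.Gamma (s+1) * Real.Gamma (s/2+(μ-(m:ℝ))) / Real.Gamma (s/2+(1-(m:ℝ)))
              * (s^(μ-1) * s^(1-μ)) * ((2:ℝ)^(1-μ)/(2:ℝ)^(1-μ))
              * (Real.Gamma (s+μ)/Real.Gamma (s+μ)) := by ring
        _ = Real.Gamma (s+1) * Real.Gamma (s/2+(μ-(m:ℝ))) / Real.Gamma (s/2+(1-(m:ℝ))) := by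
            rw [e3, div_self h2p.ne', div_self hGμ, mul_one, mul_one, mul_one]
    linear_combination hid
  · filter_upwards with s
    rw [div_eq_mul_inv]
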